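/- arXiv:2009.09907 — 2 statements merged into one kernel-verified Lean document; each statement's English description precedes it below -/
import Mathlib

section
/- Let Φ = (a_{i,j}) ∈ ℝ^{n×N} satisfy the restricted isometry property of order 1 with constant 0 < δ < 1, i.e. (1−δ)‖x‖_{ℓ₂} ≤ ‖Φx‖_{ℓ₂} ≤ (1+δ)‖x‖_{ℓ₂} for every x ∈ ℝ^N having at most one nonzero coordinate. Then for every 1 ≤ p ≤ 2, (1−δ) · n^{−1/2} · N^{1−1/p} ≤ ‖Φ‖_{ℓ_p^N → ℓ_2^n} ≤ (1+δ) · N^{1−1/p}, where ‖Φ‖_{ℓ_p^N → ℓ_2^n} denotes the operator norm of Φ from (ℝ^N, ‖·‖_{ℓ_p}) to (ℝ^n, ‖·‖_{ℓ₂}). -/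
/-- The ℓ_p norm on ℝ^m (for a real exponent p ≥ 1). -/
noncomputable def pNorm {m : ℕ} (p : ℝ) (x : Fin m → ℝ) : ℝ :=
  (∑ i, |x i| ^ p) ^ (1 / p)

/-- The operator norm of a linear map Φ : ℝ^N → ℝ^n from (ℝ^N, ‖·‖_{ℓ_p}) to (ℝ^n, ‖·‖_{ℓ₂}). -/
noncomputable def opNormP {N n : ℕ} (p : ℝ) (Φ : (Fin N → ℝ) →ₗ[ℝ] (Fin n → ℝ)) : ℝ :=
  sSup { t : ℝ | ∃ x : Fin N → ℝ, pNorm p x ≤ 1 ∧ t = pNorm 2 (Φ x) }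

lemma powmean {N : ℕ} (hN : 0 < N) (r : ℝ) (hr : 1 ≤ r) (f : Fin N → ℝ)
    (hf : ∀ j, 0 ≤ f j) :
    ∑ j, f j ≤ (N : ℝ) ^ (1 - 1/r) * (∑ j, f j ^ r) ^ (1/r) := by
  have hNpos : (0:ℝ) < N := by exact_mod_cast hN
  have h := Real.arith_mean_le_rpow_mean Finset.univ (fun _ => 1/(N:ℝ)) f
    (fun i _ => by positivity)
    (by simp [Finset.sum_const, Finset.card_univ]; field_simp)
    (fun i _ => hf i) hr
  simp only [← Finset.mul_sum] at h
  rw [Real.mul_rpow (by positivity) (Finset.sum_nonneg fun j _ => Real.rpow_nonneg (hf j) r)]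
    at h
  have h3 : (1/(N:ℝ)) ^ (1/r : ℝ) = (N:ℝ) ^ (-(1/r) : ℝ) := by
    rw [one_div, Real.inv_rpow hNpos.le, ← Real.rpow_neg hNpos.le]
  rw [h3] at h
  have h4 : (N:ℝ) ^ (1 - 1/r : ℝ) = (N:ℝ) * (N:ℝ) ^ (-(1/r) : ℝ) := by
    rw [show (1 - 1/r : ℝ) = 1 + (-(1/r)) by ring, Real.rpow_add hNpos, Real.rpow_one]
  rw [h4, mul_assoc]
  calc ∑ j, f j = (N:ℝ) * ((1/(N:ℝ)) * ∑ j, f j) := by field_simp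
    _ ≤ (N:ℝ) * ((N:ℝ) ^ (-(1/r):ℝ) * (∑ j, f j ^ r) ^ (1/r)) :=
        mul_le_mul_of_nonneg_left h hNpos.le

lemma pNorm_nonneg' {m : ℕ} (p : ℝ) (x : Fin m → ℝ) : 0 ≤ pNorm p x :=
  Real.rpow_nonneg (Finset.sum_nonneg fun _ _ => Real.rpow_nonneg (abs_nonneg _) _) _

lemma pNorm_two_eq_sqrt {m : ℕ} (v : Fin m → ℝ) :
    pNorm 2 v = Real.sqrt (∑ i, v i ^ 2) := by
  unfold pNorm
  rw [Real.sqrt_eq_rpow]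
  congr 1
  refine Finset.sum_congr rfl fun i _ => ?_
  rw [show (2:ℝ) = ((2:ℕ):ℝ) by norm_num, Real.rpow_natCast, sq_abs]

lemma pNorm_two_eq_norm {m : ℕ} (v : Fin m → ℝ) :
    pNorm 2 v = ‖(WithLp.equiv 2 (Fin m → ℝ)).symm v‖ := by
  rw [pNorm_two_eq_sqrt, EuclideanSpace.norm_eq]
  congr 1
  refine Finset.sum_congr rfl fun i _ => ?_
  rw [WithLp.equiv_symm_apply, WithLp.ofLp_toLp, Real.norm_eq_abs, sq_abs]

lemma abs_le_pNorm_two {m : ℕ} (v : Fin m → ℝ) (i : Fin m) : |v i| ≤ pNorm 2 v := by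
  rw [pNorm_two_eq_sqrt, ← Real.sqrt_sq_eq_abs]
  exact Real.sqrt_le_sqrt (Finset.single_le_sum (fun j _ => sq_nonneg (v j)) (Finset.mem_univ i))

lemma pNorm_smul {m : ℕ} {p : ℝ} (hp : 0 < p) (c : ℝ) (z : Fin m → ℝ) :
    pNorm p (c • z) = |c| * pNorm p z := by
  unfold pNorm
  have h1 : ∀ i : Fin m, |(c • z) i| ^ p = |c| ^ p * |z i| ^ p := fun i => by
    rw [Pi.smul_apply, smul_eq_mul, abs_mul, Real.mul_rpow (abs_nonneg _) (abs_nonneg _)]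
  simp only [h1, ← Finset.mul_sum]
  rw [Real.mul_rpow (Real.rpow_nonneg (abs_nonneg _) _)
    (Finset.sum_nonneg fun i _ => Real.rpow_nonneg (abs_nonneg _) _),
    ← Real.rpow_mul (abs_nonneg c), mul_one_div_cancel hp.ne', Real.rpow_one]

lemma pNorm_sq {m : ℕ} (v : Fin m → ℝ) : pNorm 2 v ^ 2 = ∑ i, v i ^ 2 := by
  rw [pNorm_two_eq_sqrt, Real.sq_sqrt (Finset.sum_nonneg fun i _ => sq_nonneg _)]

lemma pNorm_single {m : ℕ} (j : Fin m) :
    pNorm 2 (fun k => if j = k then (1:ℝ) else 0) = 1 := by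
  rw [pNorm_two_eq_sqrt]
  have : ∑ i, (if j = i then (1:ℝ) else 0) ^ 2 = 1 := by
    rw [Finset.sum_eq_single j] <;> simp +contextual [Ne.symm]
  rw [this, Real.sqrt_one]

lemma pNorm_two_sum_le {m : ℕ} {ι : Type*} (s : Finset ι) (v : ι → Fin m → ℝ) :
    pNorm 2 (∑ j ∈ s, v j) ≤ ∑ j ∈ s, pNorm 2 (v j) := by
  simp only [pNorm_two_eq_norm]
  have h : (WithLp.equiv 2 (Fin m → ℝ)).symm (∑ j ∈ s, v j)
      = ∑ j ∈ s, (WithLp.equiv 2 (Fin m → ℝ)).symm (v j) :=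
    map_sum (WithLp.linearEquiv 2 ℝ (Fin m → ℝ)).symm v s
  rw [h]
  exact norm_sum_le s _

/-- If Φ ∈ ℝ^{n×N} satisfies the restricted isometry property of order 1 with
constant 0 < δ < 1, then for 1 ≤ p ≤ 2,
(1−δ) n^{−1/2} N^{1−1/p} ≤ ‖Φ‖_{ℓ_p^N → ℓ_2^n} ≤ (1+δ) N^{1−1/p}. -/
theorem stmt18 {n N : ℕ} (hn : 0 < n) (hN : 0 < N)
    (Φ : (Fin N → ℝ) →ₗ[ℝ] (Fin n → ℝ)) (δ : ℝ) (hδ0 : 0 < δ) (hδ1 : δ < 1)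
    (hRIP : ∀ x : Fin N → ℝ, {i | x i ≠ 0}.Subsingleton →
      (1 - δ) * pNorm 2 x ≤ pNorm 2 (Φ x) ∧ pNorm 2 (Φ x) ≤ (1 + δ) * pNorm 2 x)
    (p : ℝ) (hp1 : 1 ≤ p) (hp2 : p ≤ 2) :
    (1 - δ) * (n : ℝ) ^ (-(1 : ℝ) / 2) * (N : ℝ) ^ (1 - 1 / p) ≤ opNormP p Φ ∧
    opNormP p Φ ≤ (1 + δ) * (N : ℝ) ^ (1 - 1 / p) := by
  have hp0 : (0:ℝ) < p := lt_of_lt_of_le one_pos hp1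
  have hnpos : (0:ℝ) < n := by exact_mod_cast hn
  have hNpos : (0:ℝ) < N := by exact_mod_cast hN
  set e : Fin N → Fin N → ℝ := fun i k => if i = k then 1 else 0 with he
  -- RIP applied to basis vectors
  have hss : ∀ j : Fin N, {i | e j i ≠ 0}.Subsingleton := by
    intro j a ha b hb
    simp only [Set.mem_setOf_eq, he, ne_eq, ite_eq_right_iff, one_ne_zero] at ha hb
    have h1 : j = a := by by_contra h; exact ha fun h' => absurd h' h
    have h2 : j = b := by by_contra h; exact hb fun h' => absurd h' h
    rw [← h1, ← h2]
  have hone : ∀ j : Fin N, pNorm 2 (e j) = 1 := fun j => pNorm_single j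
  have hcol_up : ∀ j : Fin N, pNorm 2 (Φ (e j)) ≤ 1 + δ := by
    intro j
    have := (hRIP (e j) (hss j)).2
    rwa [hone j, mul_one] at this
  have hcol_lo : ∀ j : Fin N, 1 - δ ≤ pNorm 2 (Φ (e j)) := by
    intro j
    have := (hRIP (e j) (hss j)).1
    rwa [hone j, mul_one] at this
  have hΦ : ∀ x : Fin N → ℝ, Φ x = ∑ j, x j • Φ (e j) := fun x =>
    LinearMap.pi_apply_eq_sum_univ Φ x
  -- key upper bound
  have key : ∀ x : Fin N → ℝ, pNorm p x ≤ 1 →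
      pNorm 2 (Φ x) ≤ (1 + δ) * (N : ℝ) ^ (1 - 1/p) := by
    intro x hx
    have h1 : pNorm 2 (Φ x) ≤ ∑ j, |x j| * (1 + δ) := by
      rw [hΦ x]
      calc pNorm 2 (∑ j, x j • Φ (e j)) ≤ ∑ j, pNorm 2 (x j • Φ (e j)) :=
            pNorm_two_sum_le Finset.univ _
        _ = ∑ j, |x j| * pNorm 2 (Φ (e j)) := by
            refine Finset.sum_congr rfl fun j _ => pNorm_smul two_pos _ _
        _ ≤ ∑ j, |x j| * (1 + δ) :=
            Finset.sum_le_sum fun j _ =>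
              mul_le_mul_of_nonneg_left (hcol_up j) (abs_nonneg _)
    have h2 : ∑ j, |x j| ≤ (N : ℝ) ^ (1 - 1/p) := by
      have := powmean hN p hp1 (fun j => |x j|) (fun j => abs_nonneg _)
      calc ∑ j, |x j| ≤ (N : ℝ) ^ (1 - 1/p) * (∑ j, |x j| ^ p) ^ (1/p) := this
        _ ≤ (N : ℝ) ^ (1 - 1/p) * 1 := by
            apply mul_le_mul_of_nonneg_left _ (Real.rpow_nonneg hNpos.le _)
            exact hx
        _ = (N : ℝ) ^ (1 - 1/p) := mul_one _
    calc pNorm 2 (Φ x) ≤ ∑ j, |x j| * (1 + δ) := h1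
      _ = (1 + δ) * ∑ j, |x j| := by rw [← Finset.sum_mul, mul_comm]
      _ ≤ (1 + δ) * (N : ℝ) ^ (1 - 1/p) :=
          mul_le_mul_of_nonneg_left h2 (by linarith)
  have hbdd : ∀ t ∈ { t : ℝ | ∃ x : Fin N → ℝ, pNorm p x ≤ 1 ∧ t = pNorm 2 (Φ x) },
      t ≤ (1 + δ) * (N : ℝ) ^ (1 - 1/p) := by
    rintro t ⟨x, hx, rfl⟩
    exact key x hx
  constructor
  · -- lower bound
    -- find a good row i₀
    have hrowsum : (1 - δ)^2 * N ≤ ∑ i, ∑ j, (Φ (e j) i)^2 := by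
      rw [Finset.sum_comm]
      have : ∀ j : Fin N, (1 - δ)^2 ≤ ∑ i, (Φ (e j) i)^2 := by
        intro j
        rw [← pNorm_sq]
        exact pow_le_pow_left₀ (by linarith) (hcol_lo j) 2
      calc (1 - δ)^2 * N = ∑ _j : Fin N, (1 - δ)^2 := by
            simp [Finset.sum_const, Finset.card_univ, mul_comm]
        _ ≤ ∑ j, ∑ i, (Φ (e j) i)^2 := Finset.sum_le_sum fun j _ => this j
    have hex : ∃ i₀ : Fin n, (1 - δ)^2 * N / n ≤ ∑ j, (Φ (e j) i₀)^2 := by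
      by_contra hcon
      push_neg at hcon
      have hlt : ∑ i, ∑ j, (Φ (e j) i)^2 < (1 - δ)^2 * N := by
        calc ∑ i, ∑ j, (Φ (e j) i)^2 < ∑ _i : Fin n, (1 - δ)^2 * N / n :=
              Finset.sum_lt_sum_of_nonempty (Finset.univ_nonempty_iff.mpr ⟨⟨0, hn⟩⟩)
                fun i _ => hcon i
          _ = (1 - δ)^2 * N := by
              rw [Finset.sum_const, Finset.card_univ, Fintype.card_fin, nsmul_eq_mul]
              field_simp
      linarith
    obtain ⟨i₀, hi₀⟩ := hex
    set z : Fin N → ℝ := fun j => Φ (e j) i₀ with hz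
    set S : ℝ := ∑ j, z j ^ 2 with hS
    have hSpos : 0 < S :=
      lt_of_lt_of_le (div_pos (mul_pos (pow_pos (by linarith) 2) hNpos) hnpos) hi₀
    -- pNorm p z > 0
    have hsumpos : 0 < ∑ j, |z j| ^ p := by
      obtain ⟨j, hj⟩ : ∃ j, z j ≠ 0 := by
        by_contra hc; push_neg at hc
        have : S = 0 := by simp [hS, hc]
        exact hSpos.ne' this
      have h1 : 0 < |z j| ^ p := Real.rpow_pos_of_pos (abs_pos.mpr hj) p
      have h2 : ∀ k ∈ Finset.univ, (0:ℝ) ≤ |z k| ^ p := fun k _ =>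
        Real.rpow_nonneg (abs_nonneg _) _
      calc (0:ℝ) < |z j| ^ p := h1
        _ ≤ ∑ k, |z k| ^ p := Finset.single_le_sum h2 (Finset.mem_univ j)
    have hZppos : 0 < pNorm p z := Real.rpow_pos_of_pos hsumpos _
    set Zp := pNorm p z with hZp
    set x : Fin N → ℝ := Zp⁻¹ • z with hx
    have hxnorm : pNorm p x ≤ 1 := by
      rw [hx, pNorm_smul hp0, abs_of_nonneg (inv_nonneg.mpr hZppos.le),
        inv_mul_cancel₀ hZppos.ne']
    -- Zp ≤ N^(1/p - 1/2) * S^(1/2)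
    have hZpbound : Zp ≤ (N:ℝ) ^ (1/p - 1/2) * S ^ (1/2 : ℝ) := by
      have hr : (1:ℝ) ≤ 2/p := (one_le_div hp0).mpr hp2
      have hpm := powmean hN (2/p) hr (fun j => |z j| ^ p)
        (fun j => Real.rpow_nonneg (abs_nonneg _) _)
      have hexp : ∀ j : Fin N, (|z j| ^ p) ^ (2/p : ℝ) = z j ^ 2 := by
        intro j
        rw [← Real.rpow_mul (abs_nonneg _), mul_div_cancel₀ _ hp0.ne',
          show (2:ℝ) = ((2:ℕ):ℝ) by norm_num, Real.rpow_natCast, sq_abs]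
      simp only [hexp] at hpm
      have h1 : (1 : ℝ) - 1/(2/p) = 1 - p/2 := by rw [one_div_div]
      have h2 : (1 : ℝ)/(2/p) = p/2 := one_div_div 2 p
      rw [h1, h2] at hpm
      have hmono : Zp ≤ ((N:ℝ) ^ (1 - p/2 : ℝ) * S ^ (p/2 : ℝ)) ^ (1/p : ℝ) := by
        rw [hZp]
        unfold pNorm
        exact Real.rpow_le_rpow (Finset.sum_nonneg fun j _ =>
          Real.rpow_nonneg (abs_nonneg _) _) hpm (by positivity)
      calc Zp ≤ ((N:ℝ) ^ (1 - p/2 : ℝ) * S ^ (p/2 : ℝ)) ^ (1/p : ℝ) := hmono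
        _ = (N:ℝ) ^ (1/p - 1/2) * S ^ (1/2 : ℝ) := by
            rw [Real.mul_rpow (Real.rpow_nonneg hNpos.le _) (Real.rpow_nonneg hSpos.le _),
              ← Real.rpow_mul hNpos.le, ← Real.rpow_mul hSpos.le,
              show (1 - p/2) * (1/p) = 1/p - 1/2 by
                rw [sub_mul, one_mul]; congr 1
                rw [div_mul_div_comm, mul_one, mul_comm,
                  div_eq_div_iff (by positivity) two_ne_zero]; ring,
              show (p/2) * (1/p) = (1/2 : ℝ) by
                rw [div_mul_div_comm, mul_one, mul_comm,
                  div_eq_div_iff (by positivity) two_ne_zero]; ring]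
    -- sqrt S lower bound
    have hsqrtS : (1 - δ) * (N:ℝ) ^ (1/2 : ℝ) * (n:ℝ) ^ (-(1:ℝ)/2) ≤ S ^ (1/2 : ℝ) := by
      have h1 : ((1 - δ)^2 * N / n : ℝ) ^ (1/2 : ℝ) ≤ S ^ (1/2 : ℝ) :=
        Real.rpow_le_rpow (by positivity) hi₀ (by norm_num)
      have h2 : ((1 - δ)^2 * N / n : ℝ) ^ (1/2 : ℝ)
          = (1 - δ) * (N:ℝ) ^ (1/2 : ℝ) * (n:ℝ) ^ (-(1:ℝ)/2) := by
        rw [div_eq_mul_inv, Real.mul_rpow (by positivity) (by positivity),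
          Real.mul_rpow (by positivity) hNpos.le,
          ← Real.rpow_natCast (1 - δ) 2, ← Real.rpow_mul (by linarith),
          Real.inv_rpow hnpos.le, ← Real.rpow_neg hnpos.le]
        norm_num
      rw [← h2]; exact h1
    -- the value attained
    have hval : (1 - δ) * (n : ℝ) ^ (-(1:ℝ)/2) * (N : ℝ) ^ (1 - 1/p) ≤ pNorm 2 (Φ x) := by
      have hΦxi : Φ x i₀ = Zp⁻¹ * S := by
        rw [hΦ x]
        rw [Finset.sum_apply]
        simp only [Pi.smul_apply, smul_eq_mul, hx]
        rw [hS, Finset.mul_sum]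
        refine Finset.sum_congr rfl fun j _ => ?_
        rw [hz]; ring
      have h1 : Φ x i₀ ≤ pNorm 2 (Φ x) :=
        le_trans (le_abs_self _) (abs_le_pNorm_two _ i₀)
      rw [hΦxi] at h1
      refine le_trans ?_ h1
      have hgoal : (1 - δ) * (n : ℝ) ^ (-(1:ℝ)/2) * (N : ℝ) ^ (1 - 1/p) * Zp ≤ S := by
        calc (1 - δ) * (n : ℝ) ^ (-(1:ℝ)/2) * (N : ℝ) ^ (1 - 1/p) * Zp
            ≤ (1 - δ) * (n : ℝ) ^ (-(1:ℝ)/2) * (N : ℝ) ^ (1 - 1/p) *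
              ((N:ℝ) ^ (1/p - 1/2) * S ^ (1/2 : ℝ)) := by
              apply mul_le_mul_of_nonneg_left hZpbound
              apply mul_nonneg (mul_nonneg (by linarith) (Real.rpow_nonneg hnpos.le _))
                (Real.rpow_nonneg hNpos.le _)
          _ = ((1 - δ) * (N:ℝ) ^ (1/2 : ℝ) * (n:ℝ) ^ (-(1:ℝ)/2)) * S ^ (1/2 : ℝ) := by
              have : (N : ℝ) ^ (1 - 1/p) * (N:ℝ) ^ (1/p - 1/2) = (N:ℝ) ^ (1/2 : ℝ) := by
                rw [← Real.rpow_add hNpos]; norm_num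
              calc (1 - δ) * (n : ℝ) ^ (-(1:ℝ)/2) * (N : ℝ) ^ (1 - 1/p) *
                  ((N:ℝ) ^ (1/p - 1/2) * S ^ (1/2 : ℝ))
                  = (1 - δ) * (n : ℝ) ^ (-(1:ℝ)/2) *
                    ((N : ℝ) ^ (1 - 1/p) * (N:ℝ) ^ (1/p - 1/2)) * S ^ (1/2 : ℝ) := by ring
                _ = ((1 - δ) * (N:ℝ) ^ (1/2 : ℝ) * (n:ℝ) ^ (-(1:ℝ)/2)) * S ^ (1/2 : ℝ) := by
                    rw [this]; ring
          _ ≤ S ^ (1/2 : ℝ) * S ^ (1/2 : ℝ) := by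
              apply mul_le_mul_of_nonneg_right hsqrtS (Real.rpow_nonneg hSpos.le _)
          _ = S := by
              rw [← Real.rpow_add hSpos]; norm_num
      calc (1 - δ) * (n : ℝ) ^ (-(1:ℝ)/2) * (N : ℝ) ^ (1 - 1/p)
          = ((1 - δ) * (n : ℝ) ^ (-(1:ℝ)/2) * (N : ℝ) ^ (1 - 1/p) * Zp) * Zp⁻¹ := by
            field_simp
        _ ≤ S * Zp⁻¹ := mul_le_mul_of_nonneg_right hgoal (inv_nonneg.mpr hZppos.le)
        _ = Zp⁻¹ * S := mul_comm _ _
    refine le_trans hval ?_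
    apply le_csSup ⟨(1 + δ) * (N : ℝ) ^ (1 - 1/p), hbdd⟩
    exact ⟨x, hxnorm, rfl⟩
  · exact Real.sSup_le hbdd (by positivity)
end

section
/- Let k, n, N be positive integers with 2k ≤ N, let C₁ ≥ 1, and let Φ : ℝ^N → ℝ^n be a linear map such that ‖x‖_{ℓ₂} ≤ ‖Φx‖_{ℓ₂} ≤ C₁‖x‖_{ℓ₂} for every x ∈ Σ_{2k}. Then there exist a map a : ℝ^N → ℝ^n that is C₁-Lipschitz with respect to the Euclidean norms, and a map M : ℝ^n → ℝ^N that is 1-Lipschitz with respect to the Euclidean norms, such that M(a(x)) = x for every x ∈ Σ_k, and ‖x − M(a(x))‖_{ℓ₂} ≤ (C₁+1) σ_k(x)_{ℓ₂} for every x ∈ ℝ^N. -/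
open Metric

/-- The set of m-sparse vectors in ℝ^N (with the Euclidean norm). -/
def sparseVectors (N m : ℕ) : Set (EuclideanSpace ℝ (Fin N)) :=
  { x | Set.ncard { i | x i ≠ 0 } ≤ m }


section Kirszbraun

open Finset

variable {E F : Type*} [NormedAddCommGroup E] [InnerProductSpace ℝ E]
  [NormedAddCommGroup F] [InnerProductSpace ℝ F] [FiniteDimensional ℝ F]


lemma sum_identity {G : Type*} [NormedAddCommGroup G] [InnerProductSpace ℝ G]
    {ι : Type*} (J : Finset ι) (w : ι → ℝ) (hw : ∑ p ∈ J, w p = 1)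
    (u : ι → G) :
    ∑ p ∈ J, ∑ q ∈ J, w p * w q * ‖u p - u q‖ ^ 2
      = 2 * ∑ p ∈ J, w p * ‖u p‖ ^ 2 - 2 * ‖∑ p ∈ J, w p • u p‖ ^ 2 := by
  have key : ∀ p ∈ J, ∀ q ∈ J, w p * w q * ‖u p - u q‖ ^ 2
      = w p * w q * ‖u p‖ ^ 2 + w p * w q * ‖u q‖ ^ 2
        - 2 * (w p * w q * inner ℝ (u p) (u q)) := by
    intro p _ q _
    rw [norm_sub_sq_real]; ring
  rw [Finset.sum_congr rfl fun p hp => Finset.sum_congr rfl (key p hp)]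
  have h1 : ∑ p ∈ J, ∑ q ∈ J, w p * w q * ‖u p‖ ^ 2 = ∑ p ∈ J, w p * ‖u p‖ ^ 2 := by
    refine Finset.sum_congr rfl fun p _ => ?_
    simp_rw [show ∀ q, w p * w q * ‖u p‖ ^ 2 = w p * ‖u p‖ ^ 2 * w q from fun q => by ring,
      ← Finset.mul_sum, hw, mul_one]
  have h2 : ∑ p ∈ J, ∑ q ∈ J, w p * w q * ‖u q‖ ^ 2 = ∑ p ∈ J, w p * ‖u p‖ ^ 2 := by
    rw [Finset.sum_comm]
    refine Finset.sum_congr rfl fun q _ => ?_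
    simp_rw [show ∀ p, w p * w q * ‖u q‖ ^ 2 = w q * ‖u q‖ ^ 2 * w p from fun p => by ring,
      ← Finset.mul_sum, hw, mul_one]
  have h3 : ∑ p ∈ J, ∑ q ∈ J, w p * w q * inner ℝ (u p) (u q)
      = ‖∑ p ∈ J, w p • u p‖ ^ 2 := by
    rw [← real_inner_self_eq_norm_sq, sum_inner]
    refine Finset.sum_congr rfl fun p _ => ?_
    rw [inner_sum]
    refine Finset.sum_congr rfl fun q _ => ?_
    rw [real_inner_smul_left, real_inner_smul_right]; ring
  simp only [Finset.sum_sub_distrib, Finset.sum_add_distrib, ← Finset.mul_sum]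
  rw [h1, h2, h3]; ring

set_option maxHeartbeats 1000000 in
lemma onePoint_finite {ι : Type*} (t : Finset ι) (a : ι → E) (b : ι → F)
    (hab : ∀ i ∈ t, ∀ j ∈ t, ‖b i - b j‖ ≤ ‖a i - a j‖) (x : E) :
    ∃ y : F, ∀ i ∈ t, ‖y - b i‖ ≤ ‖x - a i‖ := by
  classical
  rcases t.eq_empty_or_nonempty with rfl | ht
  · exact ⟨0, by simp⟩
  set v : ι → F → ℝ := fun i y => ‖y - b i‖ ^ 2 - ‖x - a i‖ ^ 2 with hv
  have hvc : ∀ i, Continuous (v i) := fun i => by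
    apply Continuous.sub _ continuous_const
    exact (continuous_id.sub continuous_const).norm.pow 2
  set m : F → ℝ := fun y => t.sup' ht (fun i => v i y) with hm
  have hmc : Continuous m := by
    have h1 := Continuous.finset_sup' (s := t) ht (f := fun i => v i) (fun i _ => hvc i)
    have h2 : m = t.sup' ht (fun i => v i) := by
      funext y; rw [hm, Finset.sup'_apply]
    rw [h2]; exact h1
  have htc := ht
  obtain ⟨i₀, hi₀⟩ := htc
  -- existence of a global minimizer of m
  set c : ℝ := ‖x - a i₀‖ ^ 2 with hc
  set R : ℝ := max 1 (m (b i₀) + c + 1) with hR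
  have hR1 : (1:ℝ) ≤ R := le_max_left _ _
  have hR2 : m (b i₀) + c + 1 ≤ R := le_max_right _ _
  obtain ⟨y₀, hy₀K, hy₀min⟩ := (isCompact_closedBall (b i₀) R).exists_isMinOn
    ⟨b i₀, mem_closedBall_self (by linarith)⟩ hmc.continuousOn
  have hglobal : ∀ y, m y₀ ≤ m y := by
    intro y
    by_cases hy : y ∈ closedBall (b i₀) R
    · exact hy₀min hy
    · have h1 : R < ‖y - b i₀‖ := by
        rw [mem_closedBall, dist_eq_norm] at hy; linarith [not_le.1 hy]
      have h2 : v i₀ y ≤ m y := Finset.le_sup' (fun j => v j y) hi₀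
      have h3 : R ^ 2 ≤ ‖y - b i₀‖ ^ 2 := by
        apply pow_le_pow_left₀ (by linarith) h1.le
      have h4 : R ≤ R ^ 2 := le_self_pow₀ hR1 two_ne_zero
      have h5 : m y₀ ≤ m (b i₀) := hy₀min (mem_closedBall_self (by linarith))
      have : v i₀ y = ‖y - b i₀‖ ^ 2 - c := rfl
      linarith
  set δ : ℝ := m y₀ with hδdef
  by_cases hδ : δ ≤ 0
  · refine ⟨y₀, fun i hi => ?_⟩
    have h1 : v i y₀ ≤ δ := Finset.le_sup' (fun j => v j y₀) hi
    have h2 : ‖y₀ - b i‖ ^ 2 ≤ ‖x - a i‖ ^ 2 := by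
      have : v i y₀ = ‖y₀ - b i‖ ^ 2 - ‖x - a i‖ ^ 2 := rfl
      linarith
    have := Real.sqrt_le_sqrt h2
    rwa [Real.sqrt_sq (norm_nonneg _), Real.sqrt_sq (norm_nonneg _)] at this
  push_neg at hδ
  exfalso
  set I : Finset ι := t.filter (fun i => v i y₀ = δ) with hI
  have hIsub : ∀ i ∈ I, i ∈ t ∧ v i y₀ = δ := fun i hi => Finset.mem_filter.1 hi
  obtain ⟨i₁, hi₁t, hieq⟩ := t.exists_mem_eq_sup' ht (fun i => v i y₀)
  have hIne : I.Nonempty := ⟨i₁, Finset.mem_filter.2 ⟨hi₁t, hieq.symm⟩⟩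
  set J : Finset F := I.image b with hJ
  -- Step 1: y₀ lies in the convex hull of the active points
  have hull : y₀ ∈ convexHull ℝ (J : Set F) := by
    by_contra hy
    obtain ⟨f, u, hfu, huf⟩ := geometric_hahn_banach_closed_point
      (convex_convexHull ℝ (J : Set F)) (J.finite_toSet.isCompact_convexHull (𝕜 := ℝ)).isClosed hy
    set w : F := (InnerProductSpace.toDual ℝ F).symm f with hwdef
    have hw : ∀ z : F, inner ℝ w z = f z := fun z => InnerProductSpace.toDual_symm_apply
    set ε : ℝ := f y₀ - u with hε
    have hεpos : 0 < ε := sub_pos.2 huf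
    have hactive : ∀ i ∈ I, ε ≤ inner ℝ (y₀ - b i) w := by
      intro i hi
      have hbi : b i ∈ convexHull ℝ (J : Set F) :=
        subset_convexHull ℝ _ (Finset.mem_coe.2 (Finset.mem_image_of_mem b hi))
      have h1 : f (b i) < u := hfu _ hbi
      have h2 : (inner ℝ (y₀ - b i) w : ℝ) = f y₀ - f (b i) := by
        rw [real_inner_comm, hw, map_sub]
      linarith
    set B : ℝ := t.sup' ht (fun i => ‖y₀ - b i‖) with hB
    have hBle : ∀ i ∈ t, ‖y₀ - b i‖ ≤ B := fun i hi => Finset.le_sup' (fun j => ‖y₀ - b j‖) hi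
    have hB0 : 0 ≤ B := le_trans (norm_nonneg _) (hBle i₀ hi₀)
    set c' : ℝ := 2 * B * ‖w‖ + ‖w‖ ^ 2 with hc'
    have hc'0 : 0 ≤ c' := by positivity
    set g : ι → ℝ := fun i => if v i y₀ = δ then (1:ℝ) else (δ - v i y₀) / (c' + 1) with hg
    have hgpos : ∀ i ∈ t, 0 < g i := by
      intro i hi
      by_cases hia : v i y₀ = δ
      · simp [hg, hia]
      · have h1 : v i y₀ ≤ δ := Finset.le_sup' (fun j => v j y₀) hi
        have h2 : v i y₀ < δ := lt_of_le_of_ne h1 hia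
        simp only [hg, if_neg hia]
        exact div_pos (by linarith) (by linarith)
    set s : ℝ := min (ε / (‖w‖ ^ 2 + 1)) (min 1 (t.inf' ht g)) with hs
    have hspos : 0 < s := by
      apply lt_min (div_pos hεpos (by positivity))
      exact lt_min one_pos ((Finset.lt_inf'_iff ht).2 hgpos)
    have hs1 : s ≤ 1 := le_trans (min_le_right _ _) (min_le_left _ _)
    have hsε : s * (‖w‖ ^ 2 + 1) ≤ ε := by
      have := min_le_left (ε / (‖w‖ ^ 2 + 1)) (min 1 (t.inf' ht g))
      rw [← hs] at this
      calc s * (‖w‖ ^ 2 + 1) ≤ ε / (‖w‖ ^ 2 + 1) * (‖w‖ ^ 2 + 1) := by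
            apply mul_le_mul_of_nonneg_right this (by positivity)
        _ = ε := div_mul_cancel₀ _ (by positivity)
    have expand : ∀ z : F, ‖z - s • w‖ ^ 2 = ‖z‖ ^ 2 - 2 * s * inner ℝ z w + s ^ 2 * ‖w‖ ^ 2 := by
      intro z
      rw [norm_sub_sq_real, real_inner_smul_right, norm_smul, Real.norm_eq_abs, mul_pow, sq_abs]
      ring
    set y' : F := y₀ - s • w with hy'
    have hvy' : ∀ i, v i y' = v i y₀ - 2 * s * inner ℝ (y₀ - b i) w + s ^ 2 * ‖w‖ ^ 2 := by
      intro i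
      have h1 : y' - b i = (y₀ - b i) - s • w := by rw [hy']; abel
      show ‖y' - b i‖ ^ 2 - ‖x - a i‖ ^ 2 = _
      rw [h1, expand]
      show _ = (‖y₀ - b i‖ ^ 2 - ‖x - a i‖ ^ 2) - _ + _
      ring
    have claim : ∀ i ∈ t, v i y' < δ := by
      intro i hi
      by_cases hia : v i y₀ = δ
      · have h1 : ε ≤ inner ℝ (y₀ - b i) w := hactive i (Finset.mem_filter.2 ⟨hi, hia⟩)
        have h2 : s ^ 2 * ‖w‖ ^ 2 ≤ s * ‖w‖ ^ 2 := by
          apply mul_le_mul_of_nonneg_right _ (by positivity)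
          nlinarith
        have h3 : 2 * s * ε ≤ 2 * s * inner ℝ (y₀ - b i) w :=
          mul_le_mul_of_nonneg_left h1 (by positivity)
        have h4 : s * ‖w‖ ^ 2 ≤ ε - s := by nlinarith
        rw [hvy' i, hia]
        nlinarith
      · have h1 : v i y₀ ≤ δ := Finset.le_sup' (fun j => v j y₀) hi
        have h2 : v i y₀ < δ := lt_of_le_of_ne h1 hia
        have h3 : s ≤ (δ - v i y₀) / (c' + 1) := by
          have ha : s ≤ g i :=
            le_trans (le_trans (min_le_right _ _) (min_le_right _ _)) (Finset.inf'_le g hi)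
          simpa [hg, if_neg hia] using ha
        have h4 : s * (c' + 1) ≤ δ - v i y₀ := by
          calc s * (c' + 1) ≤ (δ - v i y₀) / (c' + 1) * (c' + 1) :=
              mul_le_mul_of_nonneg_right h3 (by linarith)
            _ = δ - v i y₀ := div_mul_cancel₀ _ (by linarith)
        have h5 : |(inner ℝ (y₀ - b i) w : ℝ)| ≤ ‖y₀ - b i‖ * ‖w‖ := abs_real_inner_le_norm _ _
        have h6 : ‖y₀ - b i‖ ≤ B := hBle i hi
        have h7 : -(2 * s) * inner ℝ (y₀ - b i) w ≤ 2 * s * (B * ‖w‖) := by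
          have e1 : -(inner ℝ (y₀ - b i) w : ℝ) ≤ |(inner ℝ (y₀ - b i) w : ℝ)| := neg_le_abs _
          have e2 : |(inner ℝ (y₀ - b i) w : ℝ)| ≤ B * ‖w‖ :=
            h5.trans (mul_le_mul_of_nonneg_right h6 (norm_nonneg w))
          have e3 := mul_le_mul_of_nonneg_left (e1.trans e2) (show (0:ℝ) ≤ 2 * s by positivity)
          nlinarith [e3]
        have h8 : s ^ 2 * ‖w‖ ^ 2 ≤ s * ‖w‖ ^ 2 := by
          have hss : s ^ 2 ≤ s := by nlinarith
          exact mul_le_mul_of_nonneg_right hss (by positivity)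
        rw [hvy' i]
        nlinarith
    have : m y' < δ := (Finset.sup'_lt_iff ht).2 claim
    linarith [hglobal y']
  -- Step 2: extract convex combination and derive contradiction
  rw [Finset.convexHull_eq] at hull
  obtain ⟨wt, hw0, hw1, hcm⟩ := hull
  have hsum : ∑ p ∈ J, wt p • p = y₀ := by
    have h := Finset.centerMass_eq_of_sum_1 J id hw1
    simp only [id_eq] at h
    rw [← h]; exact hcm
  -- representative map
  set A : F → E := fun p => if h : ∃ i ∈ I, b i = p then a h.choose else 0 with hA
  have hrep : ∀ p ∈ J, ∃ i, i ∈ I ∧ b i = p ∧ A p = a i := by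
    intro p hp
    obtain ⟨i, hi, hbi⟩ := Finset.mem_image.1 hp
    have h : ∃ i ∈ I, b i = p := ⟨i, hi, hbi⟩
    refine ⟨h.choose, h.choose_spec.1, h.choose_spec.2, ?_⟩
    simp only [hA, dif_pos h]
  have hdist : ∀ p ∈ J, ‖y₀ - p‖ ^ 2 = ‖x - A p‖ ^ 2 + δ := by
    intro p hp
    obtain ⟨i, hiI, hbi, hAp⟩ := hrep p hp
    have h2 := (hIsub i hiI).2
    have : v i y₀ = ‖y₀ - b i‖ ^ 2 - ‖x - a i‖ ^ 2 := rfl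
    rw [hAp, ← hbi]
    linarith
  have hcross : ∀ p ∈ J, ∀ q ∈ J, ‖p - q‖ ≤ ‖A p - A q‖ := by
    intro p hp q hq
    obtain ⟨i, hiI, hbi, hAp⟩ := hrep p hp
    obtain ⟨j, hjI, hbj, hAq⟩ := hrep q hq
    rw [hAp, hAq, ← hbi, ← hbj]
    exact hab i (hIsub i hiI).1 j (hIsub j hjI).1
  -- two applications of the identity
  have id1 := sum_identity J wt hw1 (fun p => p - y₀)
  have id2 := sum_identity J wt hw1 (fun p => A p - x)
  have hzero : ∑ p ∈ J, wt p • (p - y₀) = 0 := by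
    have : ∑ p ∈ J, wt p • (p - y₀) = (∑ p ∈ J, wt p • p) - (∑ p ∈ J, wt p) • y₀ := by
      rw [Finset.sum_smul]
      rw [← Finset.sum_sub_distrib]
      exact Finset.sum_congr rfl fun p _ => smul_sub _ _ _
    rw [this, hsum, hw1, one_smul, sub_self]
  have hS1 : ∑ p ∈ J, ∑ q ∈ J, wt p * wt q * ‖(p - y₀) - (q - y₀)‖ ^ 2
      = 2 * ∑ p ∈ J, wt p * ‖p - y₀‖ ^ 2 := by
    rw [id1, hzero]
    simp
  have hE1 : ∑ p ∈ J, wt p * ‖p - y₀‖ ^ 2 = (∑ p ∈ J, wt p * ‖x - A p‖ ^ 2) + δ := by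
    have : ∀ p ∈ J, wt p * ‖p - y₀‖ ^ 2 = wt p * ‖x - A p‖ ^ 2 + wt p * δ := by
      intro p hp
      rw [show ‖p - y₀‖ = ‖y₀ - p‖ from norm_sub_rev _ _, hdist p hp]
      ring
    rw [Finset.sum_congr rfl this, Finset.sum_add_distrib, ← Finset.sum_mul, hw1, one_mul]
  have hterm : ∀ p ∈ J, ∀ q ∈ J,
      wt p * wt q * ‖(p - y₀) - (q - y₀)‖ ^ 2 ≤ wt p * wt q * ‖A p - A q‖ ^ 2 := by
    intro p hp q hq
    apply mul_le_mul_of_nonneg_left _ (mul_nonneg (hw0 p hp) (hw0 q hq))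
    rw [sub_sub_sub_cancel_right]
    exact pow_le_pow_left₀ (norm_nonneg _) (hcross p hp q hq) 2
  have hterm2 : ∀ p ∈ J, ∀ q ∈ J, ‖A p - A q‖ = ‖(A p - x) - (A q - x)‖ := by
    intro p hp q hq; rw [sub_sub_sub_cancel_right]
  have hle : ∑ p ∈ J, ∑ q ∈ J, wt p * wt q * ‖(p - y₀) - (q - y₀)‖ ^ 2
      ≤ ∑ p ∈ J, ∑ q ∈ J, wt p * wt q * ‖(A p - x) - (A q - x)‖ ^ 2 := by
    apply Finset.sum_le_sum
    intro p hp
    apply Finset.sum_le_sum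
    intro q hq
    rw [← hterm2 p hp q hq]
    exact hterm p hp q hq
  have hE2 : ∀ p ∈ J, wt p * ‖A p - x‖ ^ 2 = wt p * ‖x - A p‖ ^ 2 := by
    intro p hp; rw [norm_sub_rev]
  rw [hS1, hE1] at hle
  rw [id2, Finset.sum_congr rfl hE2] at hle
  nlinarith [norm_nonneg (∑ p ∈ J, wt p • (A p - x)),
    sq_nonneg (‖∑ p ∈ J, wt p • (A p - x)‖)]

lemma onePoint (A : Set E) (f : E → F)
    (hf : ∀ p ∈ A, ∀ q ∈ A, ‖f p - f q‖ ≤ ‖p - q‖) (x : E) :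
    ∃ y : F, ∀ p ∈ A, ‖y - f p‖ ≤ ‖x - p‖ := by
  classical
  rcases A.eq_empty_or_nonempty with rfl | ⟨a₀, ha₀⟩
  · exact ⟨0, by simp⟩
  set K : A → Set F := fun i => closedBall (f i) ‖x - (i : E)‖ with hK
  have hKclosed : ∀ i, IsClosed (K i) := fun i => isClosed_closedBall
  have hne : (closedBall (f a₀) ‖x - a₀‖ ∩ ⋂ i, K i).Nonempty := by
    rw [Set.nonempty_iff_ne_empty]
    intro hemp
    obtain ⟨u, hu⟩ := (isCompact_closedBall (f a₀) ‖x - a₀‖).elim_finite_subfamily_closed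
      K hKclosed hemp
    -- apply the finite lemma to the finset `insert a₀ u` (as a finset of A)
    obtain ⟨y, hy⟩ := onePoint_finite (insert (⟨a₀, ha₀⟩ : A) u)
      (fun i : A => (i : E)) (fun i : A => f i)
      (fun i _ j _ => hf i i.2 j j.2) x
    have hy1 : y ∈ closedBall (f a₀) ‖x - a₀‖ := by
      rw [mem_closedBall, dist_eq_norm]
      exact hy _ (Finset.mem_insert_self _ _)
    have hy2 : y ∈ ⋂ i ∈ u, K i := by
      refine Set.mem_iInter₂.2 fun i hi => ?_
      simpa [hK, dist_eq_norm] using hy i (Finset.mem_insert_of_mem hi)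
    have : y ∈ closedBall (f a₀) ‖x - a₀‖ ∩ ⋂ i ∈ u, K i := ⟨hy1, hy2⟩
    rw [hu] at this
    exact this
  obtain ⟨y, _, hy2⟩ := hne
  refine ⟨y, fun p hp => ?_⟩
  have := Set.mem_iInter.1 hy2 ⟨p, hp⟩
  simpa [hK, dist_eq_norm] using this

lemma kirszbraun (s : Set E) (f : E → F)
    (hf : ∀ p ∈ s, ∀ q ∈ s, ‖f p - f q‖ ≤ ‖p - q‖) :
    ∃ g : E → F, (∀ x y, ‖g x - g y‖ ≤ ‖x - y‖) ∧ ∀ x ∈ s, g x = f x := by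
  classical
  set 𝒮 : Set (Set (E × F)) :=
    { G | ∀ p ∈ G, ∀ q ∈ G, ‖Prod.snd p - Prod.snd q‖ ≤ ‖Prod.fst p - Prod.fst q‖ } with h𝒮
  set G₀ : Set (E × F) := (fun p => (p, f p)) '' s with hG₀
  have hG₀mem : G₀ ∈ 𝒮 := by
    rintro _ ⟨p, hp, rfl⟩ _ ⟨q, hq, rfl⟩
    exact hf p hp q hq
  have hchain : ∀ c ⊆ 𝒮, IsChain (· ⊆ ·) c → c.Nonempty →
      ∃ ub ∈ 𝒮, ∀ t ∈ c, t ⊆ ub := by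
    intro c hc hchain hcne
    refine ⟨⋃₀ c, ?_, fun t ht => Set.subset_sUnion_of_mem ht⟩
    rintro p ⟨t₁, ht₁, hp⟩ q ⟨t₂, ht₂, hq⟩
    rcases hchain.total ht₁ ht₂ with h | h
    · exact hc ht₂ p (h hp) q hq
    · exact hc ht₁ p hp q (h hq)
  obtain ⟨G, hGsub, hGmax⟩ := zorn_subset_nonempty 𝒮 hchain G₀ hG₀mem
  have hGmem : G ∈ 𝒮 := hGmax.1
  -- G is functional
  have hfun : ∀ x : E, ∀ y₁ y₂ : F, (x, y₁) ∈ G → (x, y₂) ∈ G → y₁ = y₂ := by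
    intro x y₁ y₂ h1 h2
    have h0 : ‖y₁ - y₂‖ ≤ 0 := by simpa using hGmem _ h1 _ h2
    exact sub_eq_zero.1 (norm_le_zero_iff.1 h0)
  -- G is total
  have htotal : ∀ x : E, ∃ y : F, (x, y) ∈ G := by
    intro x
    by_contra hx
    push_neg at hx
    set Adom : Set E := Prod.fst '' G with hAdom
    set f' : E → F := fun p => if h : ∃ y, (p, y) ∈ G then h.choose else 0 with hf'
    have hf'mem : ∀ p ∈ Adom, (p, f' p) ∈ G := by
      rintro p ⟨⟨p', y⟩, hpy, rfl⟩
      have h : ∃ y, (p', y) ∈ G := ⟨y, hpy⟩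
      simp only [hf', dif_pos h]
      exact h.choose_spec
    have hf'lip : ∀ p ∈ Adom, ∀ q ∈ Adom, ‖f' p - f' q‖ ≤ ‖p - q‖ := by
      intro p hp q hq
      exact hGmem _ (hf'mem p hp) _ (hf'mem q hq)
    obtain ⟨y, hy⟩ := onePoint Adom f' hf'lip x
    have hmem : insert (x, y) G ∈ 𝒮 := by
      rintro p hp q hq
      rcases Set.mem_insert_iff.1 hp with rfl | hp <;>
        rcases Set.mem_insert_iff.1 hq with rfl | hq
      · simp
      · have hq1 : q.1 ∈ Adom := ⟨q, hq, rfl⟩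
        have : q.2 = f' q.1 := hfun q.1 q.2 (f' q.1) (by rwa [← Prod.mk.eta (p := q)] at hq)
          (hf'mem _ hq1)
        rw [this]
        exact hy q.1 hq1
      · have hp1 : p.1 ∈ Adom := ⟨p, hp, rfl⟩
        have : p.2 = f' p.1 := hfun p.1 p.2 (f' p.1) (by rwa [← Prod.mk.eta (p := p)] at hp)
          (hf'mem _ hp1)
        rw [this]
        rw [show ∀ u v : F, ‖u - v‖ = ‖v - u‖ from fun u v => norm_sub_rev u v,
          show ∀ u v : E, ‖u - v‖ = ‖v - u‖ from fun u v => norm_sub_rev u v]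
        exact hy p.1 hp1
      · exact hGmem p hp q hq
    have hsub : G ⊆ insert (x, y) G := Set.subset_insert _ _
    have := hGmax.2 hmem hsub
    have : (x, y) ∈ G := this (Set.mem_insert _ _)
    exact hx y this
  choose M hM using htotal
  refine ⟨M, fun x y => hGmem _ (hM x) _ (hM y), fun x hx => ?_⟩
  exact hfun x (M x) (f x) (hM x) (hGsub ⟨x, hx, rfl⟩)

end Kirszbraun

lemma zero_mem_sparse (N m : ℕ) : (0 : EuclideanSpace ℝ (Fin N)) ∈ sparseVectors N m := by
  simp [sparseVectors]

lemma sub_mem_sparse {N k : ℕ} {x y : EuclideanSpace ℝ (Fin N)}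
    (hx : x ∈ sparseVectors N k) (hy : y ∈ sparseVectors N k) :
    x - y ∈ sparseVectors N (2 * k) := by
  have hx' : Set.ncard { i | x i ≠ 0 } ≤ k := hx
  have hy' : Set.ncard { i | y i ≠ 0 } ≤ k := hy
  have hsub : { i | (x - y) i ≠ 0 } ⊆ { i | x i ≠ 0 } ∪ { i | y i ≠ 0 } := by
    intro i hi
    simp only [Set.mem_setOf_eq] at hi
    by_contra hcon
    simp only [Set.mem_union, Set.mem_setOf_eq, not_or, not_not] at hcon
    exact hi (by simp [PiLp.sub_apply, hcon.1, hcon.2])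
  show Set.ncard { i | (x - y) i ≠ 0 } ≤ 2 * k
  calc Set.ncard { i | (x - y) i ≠ 0 }
      ≤ Set.ncard ({ i | x i ≠ 0 } ∪ { i | y i ≠ 0 }) :=
        Set.ncard_le_ncard hsub (Set.toFinite _)
    _ ≤ Set.ncard { i | x i ≠ 0 } + Set.ncard { i | y i ≠ 0 } := Set.ncard_union_le _ _
    _ ≤ k + k := add_le_add hx' hy'
    _ = 2 * k := (two_mul k).symm

/-- If a linear map Φ : ℝ^N → ℝ^n satisfies ‖x‖₂ ≤ ‖Φx‖₂ ≤ C₁‖x‖₂ on the set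
Σ_{2k} of 2k-sparse vectors, then there exist a C₁-Lipschitz map a : ℝ^N → ℝ^n and a
1-Lipschitz map M : ℝ^n → ℝ^N (Euclidean norms) with M(a(x)) = x on Σ_k and
‖x − M(a(x))‖₂ ≤ (C₁+1)σ_k(x)₂ for every x ∈ ℝ^N. -/
theorem stmt19 {k n N : ℕ} (hk : 0 < k) (hn : 0 < n) (hN : 0 < N) (h2k : 2 * k ≤ N)
    (C₁ : ℝ) (hC₁ : 1 ≤ C₁)
    (Φ : EuclideanSpace ℝ (Fin N) →ₗ[ℝ] EuclideanSpace ℝ (Fin n))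
    (hΦ : ∀ x ∈ sparseVectors N (2 * k), ‖x‖ ≤ ‖Φ x‖ ∧ ‖Φ x‖ ≤ C₁ * ‖x‖) :
    ∃ (a : EuclideanSpace ℝ (Fin N) → EuclideanSpace ℝ (Fin n))
      (M : EuclideanSpace ℝ (Fin n) → EuclideanSpace ℝ (Fin N)),
      (∀ x y, ‖a x - a y‖ ≤ C₁ * ‖x - y‖) ∧
      (∀ x y, ‖M x - M y‖ ≤ ‖x - y‖) ∧
      (∀ x ∈ sparseVectors N k, M (a x) = x) ∧
      (∀ x : EuclideanSpace ℝ (Fin N),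
        ‖x - M (a x)‖ ≤ (C₁ + 1) * infDist x (sparseVectors N k)) := by
  classical
  have hC₁pos : (0:ℝ) < C₁ := lt_of_lt_of_le one_pos hC₁
  set Sk := sparseVectors N k with hSk
  have hSne : Sk.Nonempty := ⟨0, zero_mem_sparse N k⟩
  -- the key bi-Lipschitz estimates on Σ_k
  have hlow : ∀ x ∈ Sk, ∀ y ∈ Sk, ‖x - y‖ ≤ ‖Φ x - Φ y‖ := by
    intro x hx y hy
    have := (hΦ (x - y) (sub_mem_sparse hx hy)).1
    rwa [map_sub] at this
  have hup : ∀ x ∈ Sk, ∀ y ∈ Sk, ‖Φ x - Φ y‖ ≤ C₁ * ‖x - y‖ := by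
    intro x hx y hy
    have := (hΦ (x - y) (sub_mem_sparse hx hy)).2
    rwa [map_sub] at this
  -- construction of a
  obtain ⟨at1, hat1lip, hat1eq⟩ := kirszbraun Sk (fun x => C₁⁻¹ • (Φ x)) (by
    intro p hp q hq
    rw [← smul_sub, norm_smul, Real.norm_eq_abs, abs_of_pos (inv_pos.2 hC₁pos)]
    rw [inv_mul_le_iff₀ hC₁pos]
    exact hup p hp q hq)
  set a : EuclideanSpace ℝ (Fin N) → EuclideanSpace ℝ (Fin n) := fun x => C₁ • at1 x with ha
  have halip : ∀ x y, ‖a x - a y‖ ≤ C₁ * ‖x - y‖ := by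
    intro x y
    rw [ha]
    simp only
    rw [← smul_sub, norm_smul, Real.norm_eq_abs, abs_of_pos hC₁pos]
    exact mul_le_mul_of_nonneg_left (hat1lip x y) hC₁pos.le
  have haΦ : ∀ x ∈ Sk, a x = Φ x := by
    intro x hx
    rw [ha]
    simp only
    rw [hat1eq x hx, smul_smul, mul_inv_cancel₀ (ne_of_gt hC₁pos), one_smul]
  -- injectivity of Φ on Σ_k and the inverse map
  have hinj : Set.InjOn Φ Sk := by
    intro x hx y hy hxy
    have h1 := hlow x hx y hy
    rw [hxy, sub_self, norm_zero] at h1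
    have := norm_le_zero_iff.1 h1
    exact sub_eq_zero.1 this
  set g : EuclideanSpace ℝ (Fin n) → EuclideanSpace ℝ (Fin N) :=
    Function.invFunOn Φ Sk with hg
  have hgmem : ∀ y ∈ Φ '' Sk, g y ∈ Sk ∧ Φ (g y) = y := by
    rintro y ⟨x, hx, rfl⟩
    exact ⟨Function.invFunOn_mem ⟨x, hx, rfl⟩, Function.invFunOn_eq ⟨x, hx, rfl⟩⟩
  have hginv : ∀ x ∈ Sk, g (Φ x) = x := by
    intro x hx
    have h := hgmem (Φ x) ⟨x, hx, rfl⟩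
    exact hinj h.1 hx h.2
  obtain ⟨M, hMlip, hMeq⟩ := kirszbraun (Φ '' Sk) g (by
    rintro p hp q hq
    obtain ⟨xp, hxp, rfl⟩ := hp
    obtain ⟨xq, hxq, rfl⟩ := hq
    rw [hginv xp hxp, hginv xq hxq]
    exact hlow xp hxp xq hxq)
  refine ⟨a, M, halip, hMlip, ?_, ?_⟩
  · intro x hx
    rw [haΦ x hx, hMeq _ ⟨x, hx, rfl⟩, hginv x hx]
  · intro x
    by_contra hcon
    push_neg at hcon
    have hlt : infDist x Sk < ‖x - M (a x)‖ / (C₁ + 1) := by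
      rw [lt_div_iff₀ (by linarith)]
      calc infDist x Sk * (C₁ + 1) = (C₁ + 1) * infDist x Sk := mul_comm _ _
        _ < ‖x - M (a x)‖ := hcon
    obtain ⟨y, hy, hdy⟩ := (infDist_lt_iff hSne).1 hlt
    have hMy : M (a y) = y := by
      rw [haΦ y hy, hMeq _ ⟨y, hy, rfl⟩, hginv y hy]
    have key : ‖x - M (a x)‖ ≤ (C₁ + 1) * ‖x - y‖ := by
      have h1 : ‖x - M (a x)‖ ≤ ‖x - y‖ + ‖y - M (a x)‖ := by
        have : x - M (a x) = (x - y) + (y - M (a x)) := by abel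
        rw [this]
        exact norm_add_le _ _
      have h2 : ‖y - M (a x)‖ = ‖M (a y) - M (a x)‖ := by rw [hMy]
      have h3 : ‖M (a y) - M (a x)‖ ≤ ‖a y - a x‖ := hMlip _ _
      have h4 : ‖a y - a x‖ ≤ C₁ * ‖y - x‖ := halip _ _
      have h5 : ‖y - x‖ = ‖x - y‖ := norm_sub_rev _ _
      rw [h2] at h1
      rw [h5] at h4
      linarith
    rw [dist_eq_norm] at hdy
    have : ‖x - M (a x)‖ < (C₁ + 1) * (‖x - M (a x)‖ / (C₁ + 1)) := by
      calc ‖x - M (a x)‖ ≤ (C₁ + 1) * ‖x - y‖ := key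
        _ < (C₁ + 1) * (‖x - M (a x)‖ / (C₁ + 1)) := by
            apply mul_lt_mul_of_pos_left hdy (by linarith)
    rw [mul_div_cancel₀ _ (by linarith : C₁ + 1 ≠ 0)] at this
    exact lt_irrefl _ this
end
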